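/- Let q be an odd prime power, m a positive integer coprime to q, γ ∈ ℤ/mℤ, and let τ be the size of the q-cyclotomic coset of γ modulo m. If v₂(q^τ − 1) + v₂(γ) ≥ v₂(m) + 1, then the q-cyclotomic coset of γ modulo 2m also has size τ, the cosets of γ and m+γ modulo 2m are disjoint, and their union is the full preimage of the coset of γ under the reduction map ℤ/2mℤ → ℤ/mℤ. -/

import Mathlib

/-- The `q`-cyclotomic coset modulo `n` containing `γ`: the orbit of `γ` under
multiplication by `q` in `ZMod n`. -/
def cycCoset (q n : ℕ) (γ : ZMod n) : Set (ZMod n) := {x | ∃ j : ℕ, x = γ * (q : ZMod n) ^ j}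

/-- The size of the `q`-cyclotomic coset modulo `n` containing `γ`: the least `τ > 0`
with `γ q^τ = γ` in `ZMod n`. -/
noncomputable def cycSize (q n : ℕ) (γ : ZMod n) : ℕ := sInf {t | 0 < t ∧ γ * (q : ZMod n) ^ t = γ}

private lemma fixpow {M : Type*} [Monoid M] (a b : M) (h : a * b = a) : ∀ k, a * b ^ k = a
  | 0 => by simp
  | k + 1 => by rw [pow_succ, ← mul_assoc, fixpow a b h k, h]

/-- Splitting case: if `q` is an odd prime power, `m` is coprime to `q`, `τ` is the size of the
`q`-cyclotomic coset of `γ` modulo `m`, and `2m ∣ γ(q^τ - 1)` (i.e.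
`v₂(q^τ - 1) + v₂(γ) ≥ v₂(m) + 1`), then the coset of `γ` modulo `2m` also has size `τ`,
the cosets of `γ` and `m + γ` modulo `2m` are disjoint, and their union is the full preimage
of the coset of `γ` under reduction `ZMod (2m) → ZMod m`. -/
theorem stmt6 (q m : ℕ) (hq : IsPrimePow q) (hqodd : Odd q) (hm : 0 < m)
    (hcop : Nat.Coprime m q) (γ : ZMod m) (τ : ℕ) (hτ : τ = cycSize q m γ)
    (hsplit : 2 * m ∣ γ.val * (q ^ τ - 1)) :
    cycSize q (2 * m) ((γ.val : ZMod (2 * m))) = τ ∧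
    Disjoint (cycCoset q (2 * m) (γ.val : ZMod (2 * m)))
      (cycCoset q (2 * m) ((m + γ.val : ℕ) : ZMod (2 * m))) ∧
    cycCoset q (2 * m) (γ.val : ZMod (2 * m)) ∪
        cycCoset q (2 * m) ((m + γ.val : ℕ) : ZMod (2 * m)) =
      (ZMod.castHom (dvd_mul_left m 2) (ZMod m)) ⁻¹' (cycCoset q m γ) := by
  haveI : NeZero m := ⟨hm.ne'⟩
  have hn : 0 < 2 * m := by omega
  haveI : NeZero (2 * m) := ⟨hn.ne'⟩
  have hq2 : 2 ≤ q := hq.two_le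
  set γ' : ZMod (2 * m) := (γ.val : ZMod (2 * m)) with hγ'def
  set φ : ZMod (2 * m) →+* ZMod m := ZMod.castHom (dvd_mul_left m 2) (ZMod m) with hφdef
  -- basic cast facts
  have hφγ : φ γ' = γ := by
    rw [hγ'def, map_natCast]; simp
  have hφq : φ (q : ZMod (2 * m)) = (q : ZMod m) := map_natCast φ q
  -- q is a unit mod m and mod 2m
  have hc2 : Nat.Coprime (2 * m) q :=
    Nat.Coprime.mul
      ((Nat.prime_two.coprime_iff_not_dvd).mpr
        (fun hd => (Nat.not_even_iff_odd.mpr hqodd) (even_iff_two_dvd.mpr hd))) hcop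
  have huq : IsUnit (q : ZMod m) := (ZMod.isUnit_iff_coprime q m).mpr hcop.symm
  -- sets S (mod m) and S' (mod 2m)
  set S : Set ℕ := {t | 0 < t ∧ γ * (q : ZMod m) ^ t = γ} with hSdef
  have hSne : S.Nonempty := by
    refine ⟨m.totient, Nat.totient_pos.mpr hm, ?_⟩
    have h1 : (q : ZMod m) ^ m.totient = 1 := by
      rw [← Nat.cast_pow, ← Nat.cast_one, ZMod.natCast_eq_natCast_iff]
      exact Nat.ModEq.pow_totient hcop.symm
    rw [h1, mul_one]
  have hτ' : τ = sInf {t | 0 < t ∧ γ * (q : ZMod m) ^ t = γ} := hτ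
  have hτS : τ ∈ S := hτ' ▸ Nat.sInf_mem hSne
  obtain ⟨hτpos, hfix⟩ := hτS
  -- membership in S forces divisibility by τ
  have hdvd : ∀ t, γ * (q : ZMod m) ^ t = γ → τ ∣ t := by
    intro t ht
    rcases Nat.eq_zero_or_pos (t % τ) with hr | hr
    · exact Nat.dvd_of_mod_eq_zero hr
    exfalso
    have hmulk : γ * (q : ZMod m) ^ (τ * (t / τ)) = γ := by
      rw [pow_mul]; exact fixpow _ _ hfix _
    have hrt : γ * (q : ZMod m) ^ (t % τ) = γ := by
      calc γ * (q : ZMod m) ^ (t % τ)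
          = γ * (q : ZMod m) ^ (τ * (t / τ)) * (q : ZMod m) ^ (t % τ) := by rw [hmulk]
        _ = γ * (q : ZMod m) ^ (τ * (t / τ) + t % τ) := by rw [mul_assoc, pow_add]
        _ = γ * (q : ZMod m) ^ t := by rw [Nat.div_add_mod]
        _ = γ := ht
    have hle : sInf {t | 0 < t ∧ γ * (q : ZMod m) ^ t = γ} ≤ t % τ := Nat.sInf_le ⟨hr, hrt⟩
    rw [← hτ'] at hle
    have : t % τ < τ := Nat.mod_lt _ hτpos
    omega
  -- key fixed-point fact mod 2m
  have hA : γ' * (q : ZMod (2 * m)) ^ τ = γ' := by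
    have h1 : γ.val ≤ γ.val * q ^ τ :=
      Nat.le_mul_of_pos_right _ (pow_pos (by omega) τ)
    have h2 : (γ.val * q ^ τ : ℕ) - γ.val = γ.val * (q ^ τ - 1) := by
      rw [Nat.mul_sub, mul_one]
    have h3 : ((γ.val * q ^ τ : ℕ) : ZMod (2 * m)) = ((γ.val : ℕ) : ZMod (2 * m)) := by
      rw [ZMod.natCast_eq_natCast_iff]
      exact ((Nat.modEq_iff_dvd' h1).mpr (h2 ▸ hsplit)).symm
    push_cast at h3
    rw [hγ'def]; exact h3
  have hApow : ∀ k, γ' * (q : ZMod (2 * m)) ^ (τ * k) = γ' := by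
    intro k; rw [pow_mul]; exact fixpow _ _ hA _
  -- m' := m in ZMod (2m)
  set m' : ZMod (2 * m) := (m : ZMod (2 * m)) with hm'def
  have hm'q : m' * (q : ZMod (2 * m)) = m' := by
    have h1 : ((m * q : ℕ) : ZMod (2 * m)) = ((m : ℕ) : ZMod (2 * m)) := by
      rw [ZMod.natCast_eq_natCast_iff]
      refine ((Nat.modEq_iff_dvd' (Nat.le_mul_of_pos_right _ (by omega))).mpr ?_).symm
      obtain ⟨a, ha⟩ := hqodd
      have hmd : m * q - m * 1 = m * (q - 1) := (Nat.mul_sub m q 1).symm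
      rw [mul_one] at hmd
      have : m * q - m = 2 * m * a := by
        rw [hmd, show q - 1 = 2 * a by omega]; ring
      rw [this]; exact Dvd.intro a rfl
    push_cast at h1
    exact h1
  have hm'pow : ∀ k, m' * (q : ZMod (2 * m)) ^ k = m' := fixpow _ _ hm'q
  have hm'ne : m' ≠ 0 := by
    intro h
    rw [hm'def, ZMod.natCast_eq_zero_iff] at h
    obtain ⟨c, hc⟩ := h
    rcases Nat.eq_zero_or_pos c with h0 | h0
    · subst h0; simp at hc; omega
    · have h5 : 2 * m * 1 ≤ 2 * m * c := Nat.mul_le_mul_left _ h0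
      omega
  have hsecond : ((m + γ.val : ℕ) : ZMod (2 * m)) = m' + γ' := by push_cast; rfl
  have hsecondpow : ∀ k, (m' + γ') * (q : ZMod (2 * m)) ^ k = m' + γ' * (q : ZMod (2 * m)) ^ k := by
    intro k; rw [add_mul, hm'pow]
  -- transfer: t works mod 2m → t works mod m
  have hS'S : ∀ t, γ' * (q : ZMod (2 * m)) ^ t = γ' → γ * (q : ZMod m) ^ t = γ := by
    intro t ht
    have := congrArg φ ht
    rwa [map_mul, map_pow, hφq, hφγ] at this
  -- cancellation mod m
  have hcancel : ∀ j k : ℕ, γ * (q : ZMod m) ^ j = γ * (q : ZMod m) ^ k →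
      γ' * (q : ZMod (2 * m)) ^ j = γ' * (q : ZMod (2 * m)) ^ k := by
    have key : ∀ j k : ℕ, k ≤ j → γ * (q : ZMod m) ^ j = γ * (q : ZMod m) ^ k →
        γ' * (q : ZMod (2 * m)) ^ j = γ' * (q : ZMod (2 * m)) ^ k := by
      intro j k hkj hjk
      have h1 : γ * (q : ZMod m) ^ (j - k) * (q : ZMod m) ^ k = γ * (q : ZMod m) ^ k := by
        rw [mul_assoc, ← pow_add, Nat.sub_add_cancel hkj]; exact hjk
      have h2 : γ * (q : ZMod m) ^ (j - k) = γ := (huq.pow k).mul_right_cancel h1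
      obtain ⟨s, hs⟩ := hdvd _ h2
      have h3 : γ' * (q : ZMod (2 * m)) ^ (j - k) = γ' := hs ▸ hApow s
      calc γ' * (q : ZMod (2 * m)) ^ j
          = γ' * (q : ZMod (2 * m)) ^ (j - k) * (q : ZMod (2 * m)) ^ k := by
            rw [mul_assoc, ← pow_add, Nat.sub_add_cancel hkj]
        _ = γ' * (q : ZMod (2 * m)) ^ k := by rw [h3]
    intro j k hjk
    rcases le_total k j with h | h
    · exact key j k h hjk
    · exact (key k j h hjk.symm).symm
  -- kernel of φ is {0, m'}
  have hker : ∀ d : ZMod (2 * m), φ d = 0 → d = 0 ∨ d = m' := by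
    intro d hd
    have h1 : ((d.val : ℕ) : ZMod m) = 0 := by
      rw [ZMod.natCast_val, ← ZMod.castHom_apply (h := dvd_mul_left m 2) d]
      exact hd
    rw [ZMod.natCast_eq_zero_iff] at h1
    have h2 : d.val < 2 * m := ZMod.val_lt d
    have h3 : d.val = 0 ∨ d.val = m := by
      obtain ⟨c, hc⟩ := h1
      rcases Nat.lt_or_ge c 2 with hc2 | hc2
      · interval_cases c <;> omega
      · have h5 : m * 2 ≤ m * c := Nat.mul_le_mul_left m hc2
        omega
    have h4 : ((d.val : ℕ) : ZMod (2 * m)) = d := by simp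
    rcases h3 with h | h
    · left; rw [← h4, h]; simp
    · right; rw [← h4, h]
  refine ⟨?_, ?_, ?_⟩
  · -- size
    rw [cycSize]
    apply le_antisymm
    · exact Nat.sInf_le ⟨hτpos, hA⟩
    · have hne' : {t | 0 < t ∧ γ' * (q : ZMod (2 * m)) ^ t = γ'}.Nonempty := ⟨τ, hτpos, hA⟩
      obtain ⟨hpos, hfix'⟩ := Nat.sInf_mem hne'
      have := Nat.sInf_le (show _ ∈ {t | 0 < t ∧ γ * (q : ZMod m) ^ t = γ} from ⟨hpos, hS'S _ hfix'⟩)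
      rw [← hτ'] at this
      exact this
  · -- disjoint
    rw [Set.disjoint_left]
    rintro z ⟨j, rfl⟩ ⟨k, hk⟩
    rw [hsecond, hsecondpow] at hk
    have hmodm : γ * (q : ZMod m) ^ j = γ * (q : ZMod m) ^ k := by
      have := congrArg φ hk
      rw [map_mul, map_pow, hφq, hφγ, map_add, map_mul, map_pow, hφq, hφγ] at this
      have hφm : φ m' = 0 := by rw [hm'def, map_natCast, ZMod.natCast_self]
      rw [hφm, zero_add] at this
      exact this
    have := hcancel j k hmodm
    rw [this] at hk
    exact hm'ne (by linear_combination -hk)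
  · -- union = preimage
    ext x
    simp only [Set.mem_union, Set.mem_preimage, cycCoset, Set.mem_setOf_eq]
    constructor
    · rintro (⟨j, rfl⟩ | ⟨j, rfl⟩)
      · exact ⟨j, by rw [map_mul, map_pow, hφq, hφγ]⟩
      · refine ⟨j, ?_⟩
        rw [hsecond, hsecondpow, map_add, map_mul, map_pow, hφq, hφγ]
        rw [hm'def, map_natCast, ZMod.natCast_self, zero_add]
    · rintro ⟨j, hj⟩
      have hd : φ (x - γ' * (q : ZMod (2 * m)) ^ j) = 0 := by
        rw [map_sub, map_mul, map_pow, hφq, hφγ, hj, sub_self]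
      rcases hker _ hd with h | h
      · left; exact ⟨j, by linear_combination h⟩
      · right; exact ⟨j, by rw [hsecond, hsecondpow]; linear_combination h⟩
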